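/- Adaptive restart linear convergence: under sharpness α·dist(z^{n,0}, Z*) ≤ ρ_{‖z^{n,0}−z^{n−1,0}‖}(z^{n,0}), the restart condition ρ_{‖z^{n,0}−z^{n−1,0}‖}(z^{n,0}) ≤ β·ρ_{‖z^{n−1,0}−z^{n−2,0}‖}(z^{n−1,0}) for n ≥ 2, the algorithmic bounds ρ_{‖z^{1,0}−z^{0,0}‖}(z^{1,0}) ≤ 2C‖z^{1,0}−z^{0,0}‖/τ₀ and ‖z^{1,0}−z^{0,0}‖ ≤ (q+2)·dist(z^{0,0}, Z*), we obtain dist(z^{n,0}, Z*) ≤ βⁿ·(2C(q+2)/(αβτ₀))·dist(z^{0,0}, Z*) for all n ≥ 1. -/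

import Mathlib

/-- adaptive restart linear convergence: with `D n = dist(z^{n,0}, Z*)` and
`ρ n = ρ_{‖z^{n,0}−z^{n−1,0}‖}(z^{n,0})`, sharpness `α·D n ≤ ρ n` for `n ≥ 1`, the restart
condition `ρ n ≤ β·ρ (n−1)` for `n ≥ 2`, and the algorithmic bounds
`ρ 1 ≤ 2C·r₁/τ₀` and `r₁ ≤ (q+2)·D 0` (with `r₁ = ‖z^{1,0}−z^{0,0}‖`), one has
`D n ≤ βⁿ·(2C(q+2)/(αβτ₀))·D 0` for all `n ≥ 1`. -/
theorem adaptive_restart_linear_convergence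
    (α C q β : ℝ) (τ0 : ℕ) (hα : 0 < α) (hC : 0 < C) (hq : 0 ≤ q)
    (hβ : β ∈ Set.Ioo (0 : ℝ) 1) (hτ0 : 1 ≤ τ0)
    (D ρ : ℕ → ℝ) (r1 : ℝ) (hD0 : 0 ≤ D 0)
    (hsharp : ∀ n : ℕ, 1 ≤ n → α * D n ≤ ρ n)
    (hrestart : ∀ n : ℕ, 2 ≤ n → ρ n ≤ β * ρ (n - 1))
    (h1 : ρ 1 ≤ 2 * C * r1 / τ0)
    (h2 : r1 ≤ (q + 2) * D 0) :
    ∀ n : ℕ, 1 ≤ n → D n ≤ β ^ n * (2 * C * (q + 2) / (α * β * τ0)) * D 0 := by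
  obtain ⟨hβ0, hβ1⟩ := hβ
  have hτ : (0:ℝ) < τ0 := by exact_mod_cast hτ0
  have hρ1 : ρ 1 ≤ 2 * C * (q + 2) * D 0 / τ0 := by
    refine h1.trans ?_
    have h2C : (0:ℝ) ≤ 2 * C := by linarith
    have h3 : 2 * C * r1 / τ0 ≤ 2 * C * ((q + 2) * D 0) / τ0 := by
      gcongr
    refine h3.trans (le_of_eq ?_); ring
  have key : ∀ n : ℕ, ρ (n + 1) ≤ β ^ n * (2 * C * (q + 2) * D 0 / τ0) := by
    intro n
    induction n with
    | zero => simpa using hρ1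
    | succ k ih =>
      have hr := hrestart (k + 2) (by omega)
      have hk : (k + 2) - 1 = k + 1 := by omega
      rw [hk] at hr
      calc ρ (k + 2) ≤ β * ρ (k + 1) := hr
        _ ≤ β * (β ^ k * (2 * C * (q + 2) * D 0 / τ0)) := by
            exact mul_le_mul_of_nonneg_left ih hβ0.le
        _ = β ^ (k + 1) * (2 * C * (q + 2) * D 0 / τ0) := by ring
  intro n hn
  obtain ⟨m, rfl⟩ := Nat.exists_eq_add_of_le hn
  have hD := hsharp (1 + m) (by omega)
  have hkey := key m
  rw [Nat.add_comm 1 m] at hD ⊢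
  have hDm : α * D (m + 1) ≤ β ^ m * (2 * C * (q + 2) * D 0 / τ0) := hD.trans hkey
  have heq : β ^ (m + 1) * (2 * C * (q + 2) / (α * β * τ0)) * D 0 =
      β ^ m * (2 * C * (q + 2) * D 0 / τ0) / α := by
    rw [pow_succ]
    field_simp
  rw [heq]
  rw [le_div_iff₀ hα]
  linarith
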